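/- Fix d ≥ 1, α > d/2 and f > 0. Define a_j := f·2^{−(d+α)(|j|+1)/3} for j ∈ J. Then Σ_{j∈J} a_j² < ∞ and c_j a_ȷ̄² = a_j Σ_{k∈O_j} c_k a_k for every j ∈ J (with the root convention a_{∅̄} = f); consequently the constant functions X_j(t) ≡ a_j form a Leray solution of the forced inviscid KP tree model with forcing f. -/

import Mathlib

open Set

namespace Stmt17

/-- Nodes of the `2^d`-ary tree: finite words over an alphabet with `2^d` letters.
The root is the empty word, the parent of `a :: j` is `j`, and the children of `j`
are the words `a :: j` for `a : Fin (2^d)`. -/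
abbrev Word (d : ℕ) := List (Fin (2 ^ d))

/-- The coefficient `c_j = 2^(α |j|)`. -/
noncomputable def coef (α : ℝ) {d : ℕ} (j : Word d) : ℝ := (2 : ℝ) ^ (α * (j.length : ℝ))

/-- The value at the parent node, with the convention that the (fictitious) parent of the
root carries the forcing value `f`. -/
def parentVal {d : ℕ} (f : ℝ) (X : Word d → ℝ) : Word d → ℝ
  | [] => f
  | _ :: j => X j

/-- The candidate constant solution `a_j = f·2^(−(d+α)(|j|+1)/3)` of the forced inviscid
KP tree model. -/
noncomputable def aKP (d : ℕ) (α f : ℝ) (j : Word d) : ℝ :=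
  f * (2 : ℝ) ^ (-(((d : ℝ) + α) * ((j.length : ℝ) + 1)) / 3)

lemma summable_words (m : ℕ) (C ρ : ℝ) (hC : 0 ≤ C) (hρ : 0 ≤ ρ) (h : (m:ℝ) * ρ < 1) :
    Summable fun j : List (Fin m) => C * ρ ^ j.length := by
  have hg : Summable fun s : Σ n, Fin n → Fin m => C * ρ ^ s.1 := by
    rw [summable_sigma_of_nonneg (fun s => mul_nonneg hC (pow_nonneg hρ _))]
    refine ⟨fun n => Summable.of_finite, ?_⟩
    have : ∀ n : ℕ, (∑' _ : Fin n → Fin m, C * ρ ^ n) = C * ((m:ℝ) * ρ) ^ n := by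
      intro n
      rw [tsum_fintype, Finset.sum_const, Finset.card_univ, Fintype.card_fun, Fintype.card_fin,
        Fintype.card_fin, nsmul_eq_mul, mul_pow]
      push_cast
      ring
    simp only [this]
    exact (summable_geometric_of_lt_one (mul_nonneg (Nat.cast_nonneg m) hρ) h).mul_left C
  exact (Equiv.summable_iff List.equivSigmaTuple).2 hg

lemma rpow_calc (d α f n : ℝ) :
    (2:ℝ)^(α*n) * (f * (2:ℝ)^(-((d+α)*n)/3))^2
      = (f * (2:ℝ)^(-((d+α)*(n+1))/3)) *
        ((2:ℝ)^d * ((2:ℝ)^(α*(n+1)) * (f * (2:ℝ)^(-((d+α)*(n+2))/3)))) := by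
  have h2 : (0:ℝ) < 2 := two_pos
  have L : (2:ℝ)^(α*n) * (f * (2:ℝ)^(-((d+α)*n)/3))^2
      = f^2 * (2:ℝ)^(α*n + (-((d+α)*n)/3 * 2)) := by
    rw [mul_pow, ← Real.rpow_natCast ((2:ℝ)^(-((d+α)*n)/3)) 2, ← Real.rpow_mul h2.le,
      Real.rpow_add h2]
    push_cast; ring
  have R : (f * (2:ℝ)^(-((d+α)*(n+1))/3)) *
        ((2:ℝ)^d * ((2:ℝ)^(α*(n+1)) * (f * (2:ℝ)^(-((d+α)*(n+2))/3))))
      = f^2 * (2:ℝ)^(-((d+α)*(n+1))/3 + (d + (α*(n+1) + -((d+α)*(n+2))/3))) := by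
    rw [Real.rpow_add h2, Real.rpow_add h2, Real.rpow_add h2]; ring
  rw [L, R]
  congr 1
  ring

lemma parentVal_aKP (d : ℕ) (α f : ℝ) (j : Word d) :
    parentVal f (aKP d α f) j = f * (2:ℝ) ^ (-(((d:ℝ)+α) * (j.length : ℝ))/3) := by
  cases j with
  | nil => simp [parentVal]
  | cons a j' =>
      simp only [parentVal, aKP, List.length_cons]
      push_cast
      ring_nf

theorem kp_constant_solution' (d : ℕ) (hd : 1 ≤ d) (α f : ℝ) (hα : (d : ℝ) / 2 < α)
    (hf : 0 < f) :
    (Summable fun j : Word d => (aKP d α f j) ^ 2) ∧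
    (∀ j : Word d,
      coef α j * (parentVal f (aKP d α f) j) ^ 2
        = aKP d α f j * ∑ a : Fin (2 ^ d), coef α (a :: j) * aKP d α f (a :: j)) ∧
    (∀ j : Word d, ∀ t ∈ Ici (0 : ℝ),
      HasDerivWithinAt (fun _ : ℝ => aKP d α f j)
        (coef α j * (parentVal f (aKP d α f) j) ^ 2
          - aKP d α f j * ∑ a : Fin (2 ^ d), coef α (a :: j) * aKP d α f (a :: j))
        (Ici 0) t) ∧
    (∃ M : ℝ, ∀ t ∈ Ici (0 : ℝ), (∑' j : Word d, (aKP d α f j) ^ 2) ≤ M) := by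
  have h2 : (0:ℝ) < 2 := two_pos
  set e : ℝ := -(2 * ((d:ℝ) + α)) / 3 with he
  have hρ : (0:ℝ) ≤ (2:ℝ) ^ e := (Real.rpow_pos_of_pos h2 e).le
  have hbal : ∀ j : Word d,
      coef α j * (parentVal f (aKP d α f) j) ^ 2
        = aKP d α f j * ∑ a : Fin (2 ^ d), coef α (a :: j) * aKP d α f (a :: j) := by
    intro j
    have hsum : (∑ a : Fin (2 ^ d), coef α (a :: j) * aKP d α f (a :: j))
        = (2:ℝ)^(d:ℝ) * (coef α ((0 : Fin (2^d)) :: j) * aKP d α f ((0 : Fin (2^d)) :: j)) := by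
      have : ∀ a : Fin (2^d), coef α (a :: j) * aKP d α f (a :: j)
          = coef α ((0 : Fin (2^d)) :: j) * aKP d α f ((0 : Fin (2^d)) :: j) := by
        intro a; rfl
      rw [Finset.sum_congr rfl (fun a _ => this a), Finset.sum_const, Finset.card_univ,
        Fintype.card_fin, nsmul_eq_mul]
      push_cast
      rw [Real.rpow_natCast]
    rw [hsum, parentVal_aKP]
    have := rpow_calc (d:ℝ) α f (j.length : ℝ)
    simp only [coef, aKP, List.length_cons]
    push_cast
    convert this using 3 <;> ring
  refine ⟨?_, hbal, ?_, ?_⟩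
  · have hform : ∀ j : Word d, (aKP d α f j) ^ 2
        = (f^2 * (2:ℝ)^e) * ((2:ℝ)^e) ^ j.length := by
      intro j
      rw [← Real.rpow_natCast ((2:ℝ)^e) j.length, ← Real.rpow_mul h2.le,
        aKP, mul_pow, ← Real.rpow_natCast ((2:ℝ)^(-(((d : ℝ) + α) * ((j.length : ℝ) + 1)) / 3)) 2,
        ← Real.rpow_mul h2.le, mul_assoc, ← Real.rpow_add h2]
      push_cast
      ring_nf
      rw [he]; ring_nf
    have hlt : ((2^d : ℕ) : ℝ) * (2:ℝ)^e < 1 := by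
      push_cast
      rw [← Real.rpow_natCast (2:ℝ) d, ← Real.rpow_add h2]
      apply Real.rpow_lt_one_of_one_lt_of_neg one_lt_two
      rw [he]
      linarith
    have := summable_words (2^d) (f^2 * (2:ℝ)^e) ((2:ℝ)^e)
      (mul_nonneg (sq_nonneg f) hρ) hρ hlt
    exact (summable_congr hform).2 this
  · intro j t ht
    have h0 : coef α j * (parentVal f (aKP d α f) j) ^ 2
        - aKP d α f j * ∑ a : Fin (2 ^ d), coef α (a :: j) * aKP d α f (a :: j) = 0 :=
      sub_eq_zero_of_eq (hbal j)
    rw [h0]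
    exact hasDerivWithinAt_const t _ _
  · exact ⟨∑' j : Word d, (aKP d α f j) ^ 2, fun t _ => le_rfl⟩

/-- Fix `d ≥ 1`, `α > d/2`, `f > 0` and set `a_j = f·2^(−(d+α)(|j|+1)/3)`.
Then `Σ_{j∈J} a_j² < ∞` and `c_j a_ȷ̄² = a_j Σ_{k∈O_j} c_k a_k` for every `j` (with the
root convention `a_{∅̄} = f`); consequently the constant functions `X_j(t) ≡ a_j` form a
Leray solution of the forced inviscid KP tree model with forcing `f`. -/
theorem kp_constant_solution (d : ℕ) (hd : 1 ≤ d) (α f : ℝ) (hα : (d : ℝ) / 2 < α)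
    (hf : 0 < f) :
    (Summable fun j : Word d => (aKP d α f j) ^ 2) ∧
    (∀ j : Word d,
      coef α j * (parentVal f (aKP d α f) j) ^ 2
        = aKP d α f j * ∑ a : Fin (2 ^ d), coef α (a :: j) * aKP d α f (a :: j)) ∧
    (∀ j : Word d, ∀ t ∈ Ici (0 : ℝ),
      HasDerivWithinAt (fun _ : ℝ => aKP d α f j)
        (coef α j * (parentVal f (aKP d α f) j) ^ 2
          - aKP d α f j * ∑ a : Fin (2 ^ d), coef α (a :: j) * aKP d α f (a :: j))
        (Ici 0) t) ∧
    (∃ M : ℝ, ∀ t ∈ Ici (0 : ℝ), (∑' j : Word d, (aKP d α f j) ^ 2) ≤ M) := by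
  exact kp_constant_solution' d hd α f hα hf

end Stmt17
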